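/- For every n ∈ ℕ, the q-Euler polynomial expands in the q-Frobenius–Euler basis as E_{n,q}(x) = (1/(1 − λ)) · ∑_{k=0}^{n} C(n,k)_q · ( E_{n−k,q}(1) − λ · E_{n−k,q} ) · H_{k,q}(x|λ), where E_{n−k,q}(1) is the evaluation of E_{n−k,q}(x) at x = 1. -/

import Mathlib

open Finset Polynomial

/-- The `q`-integer `[n]_q = (1 - q^n)/(1 - q)` viewed in `ℂ`. -/
noncomputable def qInt (q : ℝ) (n : ℕ) : ℂ := (1 - (q : ℂ) ^ n) / (1 - (q : ℂ))

/-- The `q`-factorial `[n]_q! = ∏_{j=1}^n [j]_q`. -/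
noncomputable def qFact (q : ℝ) (n : ℕ) : ℂ := ∏ j ∈ Finset.range n, qInt q (j + 1)

/-- The `q`-binomial coefficient `[n]_q!/([k]_q! [n-k]_q!)`. -/
noncomputable def qBinom (q : ℝ) (n k : ℕ) : ℂ := qFact q n / (qFact q k * qFact q (n - k))

/-- The formal `q`-exponential `e_q(t) = ∑ t^n/[n]_q!` in `ℂ[x][[t]]`. -/
noncomputable def qExp (q : ℝ) : PowerSeries (Polynomial ℂ) :=
  PowerSeries.mk fun n => Polynomial.C (1 / qFact q n)

/-- The formal series `e_q(xt) = ∑ x^n t^n/[n]_q!` in `ℂ[x][[t]]`. -/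
noncomputable def qExpX (q : ℝ) : PowerSeries (Polynomial ℂ) :=
  PowerSeries.mk fun n => Polynomial.C (1 / qFact q n) * Polynomial.X ^ n

/-- `H : ℕ → ℂ[x]` is the family of `q`-Frobenius-Euler polynomials `H_{n,q}(x|λ)`:
`(∑ H_n t^n/[n]_q!) ⬝ (e_q(t) - λ) = (1 - λ) e_q(xt)` in `ℂ[x][[t]]`. -/
def IsqFrobeniusEuler (q : ℝ) (lam : ℂ) (H : ℕ → Polynomial ℂ) : Prop :=
  (PowerSeries.mk fun n => Polynomial.C (1 / qFact q n) * H n) *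
      (qExp q - PowerSeries.C (Polynomial.C lam)) =
    PowerSeries.C (Polynomial.C (1 - lam)) * qExpX q

/-- `E : ℕ → ℂ[x]` is the family of `q`-Euler polynomials `E_{n,q}(x)`:
`(∑ E_n t^n/[n]_q!) ⬝ (e_q(t) + 1) = 2 e_q(xt)` in `ℂ[x][[t]]`. -/
def IsqEuler (q : ℝ) (E : ℕ → Polynomial ℂ) : Prop :=
  (PowerSeries.mk fun n => Polynomial.C (1 / qFact q n) * E n) * (qExp q + 1) =
    2 * qExpX q

lemma qFact_ne_zero (q : ℝ) (hq0 : 0 < q) (hq1 : q < 1) (n : ℕ) : qFact q n ≠ 0 := by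
  unfold qFact
  rw [Finset.prod_ne_zero_iff]
  intro j _
  unfold qInt
  have h1 : (q : ℂ) ^ (j + 1) ≠ 1 := by
    have : q ^ (j + 1) < 1 := pow_lt_one₀ hq0.le hq1 (Nat.succ_ne_zero j)
    intro h
    have : ((q ^ (j + 1) : ℝ) : ℂ) = 1 := by push_cast; exact h
    rw [Complex.ofReal_eq_one] at this
    linarith
  have h2 : (q : ℂ) ≠ 1 := by
    intro h
    rw [Complex.ofReal_eq_one] at h
    linarith
  exact div_ne_zero (sub_ne_zero.mpr (fun h => h1 h.symm))
    (sub_ne_zero.mpr (fun h => h2 h.symm))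

lemma map_mk_ps (φ : Polynomial ℂ →+* Polynomial ℂ) (f : ℕ → Polynomial ℂ) :
    PowerSeries.map φ (PowerSeries.mk f) = PowerSeries.mk fun n => φ (f n) := by
  ext n
  simp [PowerSeries.coeff_map, PowerSeries.coeff_mk]

/-- `E_{n,q}(x) = (1/(1-λ)) ∑_{k=0}^n C(n,k)_q (E_{n-k,q}(1) - λ E_{n-k,q}) H_{k,q}(x|λ)`. -/
theorem qEuler_expansion_in_qFrobeniusEuler_basis
    (q : ℝ) (hq0 : 0 < q) (hq1 : q < 1) (lam : ℂ) (hlam : lam ≠ 1)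
    (H : ℕ → Polynomial ℂ) (hH : IsqFrobeniusEuler q lam H)
    (E : ℕ → Polynomial ℂ) (hE : IsqEuler q E) (n : ℕ) :
    E n = Polynomial.C (1 / (1 - lam)) * ∑ k ∈ Finset.range (n + 1),
      Polynomial.C (qBinom q n k *
        ((E (n - k)).eval 1 - lam * (E (n - k)).eval 0)) * H k := by
  have hfact := qFact_ne_zero q hq0 hq1
  have h1lam : (1 : ℂ) - lam ≠ 0 := sub_ne_zero.mpr (Ne.symm hlam)
  set Clam : PowerSeries (Polynomial ℂ) := PowerSeries.C (Polynomial.C lam)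
    with hClam
  set A : PowerSeries (Polynomial ℂ) :=
    PowerSeries.mk fun m => Polynomial.C (1 / qFact q m) * E m with hA
  set Ah : PowerSeries (Polynomial ℂ) :=
    PowerSeries.mk fun m => Polynomial.C (1 / qFact q m) * H m with hAh
  set A1 : PowerSeries (Polynomial ℂ) :=
    PowerSeries.mk fun m => Polynomial.C (1 / qFact q m * (E m).eval 1) with hA1def
  set A0 : PowerSeries (Polynomial ℂ) :=
    PowerSeries.mk fun m => Polynomial.C (1 / qFact q m * (E m).eval 0) with hA0def
  -- evaluation homs
  set φ1 : Polynomial ℂ →+* Polynomial ℂ := Polynomial.C.comp (Polynomial.evalRingHom 1)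
  set φ0 : Polynomial ℂ →+* Polynomial ℂ := Polynomial.C.comp (Polynomial.evalRingHom 0)
  have hq0fact : qFact q 0 = 1 := by simp [qFact]
  -- A1 * (e+1) = 2 e
  have hA1 : A1 * (qExp q + 1) = 2 * qExp q := by
    have := congrArg (PowerSeries.map φ1) hE
    simp only [map_mul, map_add, map_ofNat, map_one] at this
    rw [map_mk_ps] at this
    have he : PowerSeries.map φ1 (qExp q) = qExp q := by
      rw [qExp, map_mk_ps]; simp [φ1]
    have hx : PowerSeries.map φ1 (qExpX q) = qExp q := by
      rw [qExpX, qExp, map_mk_ps]; simp [φ1]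
    rw [he, hx] at this
    convert this using 3 with m
    simp [φ1, A1]
  -- A0 * (e+1) = 2
  have hA0 : A0 * (qExp q + 1) = 2 := by
    have := congrArg (PowerSeries.map φ0) hE
    simp only [map_mul, map_add, map_ofNat, map_one] at this
    rw [map_mk_ps] at this
    have he : PowerSeries.map φ0 (qExp q) = qExp q := by
      rw [qExp, map_mk_ps]; simp [φ0]
    have hx : PowerSeries.map φ0 (qExpX q) = 1 := by
      rw [qExpX, map_mk_ps]
      ext m
      simp only [PowerSeries.coeff_mk, PowerSeries.coeff_one, φ0]
      cases m with
      | zero => simp [hq0fact]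
      | succ m => simp
    rw [he, hx, mul_one] at this
    convert this using 3 with m
    simp [φ0, A0]
  -- key identity
  have hD1 : qExp q + 1 ≠ 0 := by
    intro h
    have h2 := congrArg (PowerSeries.constantCoeff) h
    simp [qExp, PowerSeries.constantCoeff_mk, hq0fact] at h2
  have hD2 : qExp q - Clam ≠ 0 := by
    intro h
    apply hlam
    have h2 := congrArg (PowerSeries.constantCoeff) h
    simp [qExp, hClam, PowerSeries.constantCoeff_mk, hq0fact, sub_eq_zero] at h2
    have h3 := congrArg (Polynomial.eval 0) h2
    simpa using h3.symm
  have key : PowerSeries.C (Polynomial.C (1 - lam)) * A =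
      Ah * (A1 - Clam * A0) := by
    apply mul_right_cancel₀ (b := (qExp q + 1) * (qExp q - Clam)) (mul_ne_zero hD1 hD2)
    have hHH : Ah * (qExp q - Clam) =
        PowerSeries.C (Polynomial.C (1 - lam)) * qExpX q := hH
    have hEE : A * (qExp q + 1) = 2 * qExpX q := hE
    linear_combination (PowerSeries.C (Polynomial.C (1 - lam)) *
        (qExp q - Clam)) * hEE
      - ((A1 - Clam * A0) * (qExp q + 1)) * hHH
      - (PowerSeries.C (Polynomial.C (1 - lam)) * qExpX q) * hA1
      + (PowerSeries.C (Polynomial.C (1 - lam)) * qExpX q * Clam) * hA0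
  -- extract coefficient n
  have hcoef := congrArg (PowerSeries.coeff n) key
  rw [PowerSeries.coeff_C_mul, PowerSeries.coeff_mul,
    Finset.Nat.sum_antidiagonal_eq_sum_range_succ_mk] at hcoef
  simp only [map_sub, hClam, PowerSeries.coeff_C_mul, PowerSeries.coeff_mk, A, Ah, A1, A0]
    at hcoef
  rw [← Polynomial.C_sub] at hcoef
  -- rearrange
  apply mul_left_cancel₀ (a := Polynomial.C ((1 - lam) / qFact q n))
    (by simpa using div_ne_zero h1lam (hfact n))
  have hL : Polynomial.C ((1 - lam) / qFact q n) * E n =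
      Polynomial.C (1 - lam) * (Polynomial.C (1 / qFact q n) * E n) := by
    rw [← mul_assoc, ← Polynomial.C_mul]
    ring_nf
  rw [hL, hcoef, Finset.mul_sum, Finset.mul_sum]
  apply Finset.sum_congr rfl
  intro k hk
  have hc : 1 / qFact q k * (1 / qFact q (n - k) * (E (n - k)).eval 1
        - lam * (1 / qFact q (n - k) * (E (n - k)).eval 0)) =
      (1 - lam) / qFact q n * (1 / (1 - lam) *
        (qBinom q n k * ((E (n - k)).eval 1 - lam * (E (n - k)).eval 0))) := by
    unfold qBinom
    field_simp [hfact n, hfact k, hfact (n - k), h1lam]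
  calc Polynomial.C (1 / qFact q k) * H k *
        (Polynomial.C (1 / qFact q (n - k) * (E (n - k)).eval 1) -
          Polynomial.C lam * Polynomial.C (1 / qFact q (n - k) * (E (n - k)).eval 0))
      = Polynomial.C (1 / qFact q k * (1 / qFact q (n - k) * (E (n - k)).eval 1
          - lam * (1 / qFact q (n - k) * (E (n - k)).eval 0))) * H k := by
        simp only [map_sub, map_mul]; ring
    _ = _ := by
        rw [hc]
        simp only [map_mul]; ring
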